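/- Let r ≥ 1. For every ε > 0 there exists N such that for every non-decreasing class F with |F| ≥ N, opt_weak(CART_r(F)) ≥ (1−ε)·r·ln(|F|). -/

import Mathlib

/-- `GuessForce ok V m` means: in the mistake-bound game with weak (yes/no) reinforcement
where queries have type `Q`, guesses have type `A`, and `ok q g f` says that guess `g` is a
correct answer to query `q` when the hidden target is `f`, an (adaptive) adversary whose
answers must stay consistent with some member of the current version space `V` can force
every deterministic learner to be answered "no" at least `m` times.
At each step the adversary chooses a query `q` and, depending on the learner's guess `g`,
either answers "no" (`c g = true`, one more mistake, continuing from the consistent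
functions for which the guess is wrong) or answers "yes" (`c g = false`, continuing from the
consistent functions for which the guess is correct). -/
inductive GuessForce {α Q A : Type*} (ok : Q → A → α → Prop) : Set α → ℕ → Prop where
  | zero (V : Set α) : V.Nonempty → GuessForce ok V 0
  | step (V : Set α) (m : ℕ) (q : Q) (c : A → Bool)
      (hne : ∀ g : A, (if c g then {f ∈ V | ¬ ok q g f} else {f ∈ V | ok q g f}).Nonempty)
      (h : ∀ g : A, GuessForce ok (if c g then {f ∈ V | ¬ ok q g f} else {f ∈ V | ok q g f})
        (if c g then m else m + 1)) :
      GuessForce ok V (m + 1)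

/-- `opt_weak(CART_r(F))`: the optimal worst-case number of mistakes in the `r`-input weak
reinforcement model, where in each round the adversary presents `r` inputs simultaneously,
the learner guesses all `r` outputs, and is only told whether all `r` guesses are correct. -/
noncomputable def optWeakCart {X Y : Type*} (r : ℕ) (F : Set (X → Y)) : ℕ :=
  sSup {m | GuessForce (fun (x : Fin r → X) (g : Fin r → Y) f => ∀ i, f (x i) = g i) F m}

universe u

set_option linter.unusedSectionVars false
set_option maxHeartbeats 1000000

section Aux
variable {X : Type u} [Fintype X] [LinearOrder X]

lemma mono_total {f g : X → Bool} (hf : Monotone f) (hg : Monotone g) : f ≤ g ∨ g ≤ f := by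
  by_contra h
  push_neg at h
  obtain ⟨h1, h2⟩ := h
  obtain ⟨a, ha⟩ := not_forall.mp h1
  obtain ⟨b, hb⟩ := not_forall.mp h2
  have ha' : f a = true ∧ g a = false := by revert ha; cases (f a) <;> cases (g a) <;> simp
  have hb' : g b = true ∧ f b = false := by revert hb; cases (g b) <;> cases (f b) <;> simp
  rcases le_total a b with hab | hab
  · have := hf hab; rw [ha'.1, hb'.2] at this; exact absurd this (by simp)
  · have := hg hab; rw [hb'.1, ha'.2] at this; exact absurd this (by simp)

noncomputable def wt (f : X → Bool) : ℕ :=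
  (Finset.univ.filter fun x => f x = true).card

lemma wt_mono {f g : X → Bool} (h : f ≤ g) : wt f ≤ wt g := by
  apply Finset.card_le_card
  intro x hx
  simp only [Finset.mem_filter, Finset.mem_univ, true_and] at *
  have := h x; rw [hx] at this; exact Bool.eq_true_of_true_le this

lemma wt_strict_mono {f g : X → Bool} (h : f < g) : wt f < wt g := by
  apply Finset.card_lt_card
  constructor
  · intro x hx
    simp only [Finset.mem_filter, Finset.mem_univ, true_and] at *
    have := h.1 x; rw [hx] at this; exact Bool.eq_true_of_true_le this
  · intro hsub
    apply h.2
    intro x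
    by_cases hgx : g x = true
    · have : x ∈ Finset.univ.filter fun x => f x = true := hsub (by simpa using hgx)
      simp only [Finset.mem_filter, Finset.mem_univ, true_and] at this
      rw [this, hgx]
    · simp only [Bool.not_eq_true] at hgx; rw [hgx]; exact Bool.false_le _

lemma le_of_wt_le {f g : X → Bool} (hf : Monotone f) (hg : Monotone g)
    (h : wt f ≤ wt g) : f ≤ g := by
  rcases mono_total hf hg with h' | h'
  · exact h'
  · rcases eq_or_lt_of_le h' with he | hl
    · exact le_of_eq he.symm
    · exact absurd (wt_strict_mono hl) (by omega)

lemma wt_inj {f g : X → Bool} (hf : Monotone f) (hg : Monotone g)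
    (h : wt f = wt g) : f = g :=
  le_antisymm (le_of_wt_le hf hg h.le) (le_of_wt_le hg hf h.ge)

lemma split (r k : ℕ) (hr : 1 ≤ r) (V : Set (X → Bool)) (hmono : ∀ f ∈ V, Monotone f)
    (hk : V.ncard = k) (hk2 : 2 ≤ k) :
    ∃ q : Fin r → X, ∀ g : Fin r → Bool,
      {f ∈ V | ∀ i, f (q i) = g i}.ncard ≤ (k + r) / (r + 1) := by
  have hfin : V.Finite := Set.toFinite V
  set Vf := hfin.toFinset with hVf
  have hVfcard : Vf.card = k := by
    rw [← hk, Set.ncard_eq_toFinset_card _ hfin]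
  have hVfmem : ∀ f, f ∈ Vf ↔ f ∈ V := fun f => hfin.mem_toFinset
  set W := Vf.image wt with hWdef
  have hWcard : W.card = k := by
    rw [hWdef, Finset.card_image_of_injOn, hVfcard]
    intro f hf g hg h
    exact wt_inj (hmono f ((hVfmem f).mp hf)) (hmono g ((hVfmem g).mp hg)) h
  set e := W.orderIsoOfFin hWcard with he
  -- the enumeration of V by index
  have hΦ : ∀ i : Fin k, ∃ f, f ∈ V ∧ wt f = (e i : ℕ) := by
    intro i
    have : (e i : ℕ) ∈ W := (e i).2
    obtain ⟨f, hf, hwf⟩ := Finset.mem_image.mp this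
    exact ⟨f, (hVfmem f).mp hf, hwf⟩
  choose Φ hΦV hΦw using hΦ
  have hΦmono : ∀ i, Monotone (Φ i) := fun i => hmono _ (hΦV i)
  -- arithmetic setup
  set s := (k + r) / (r + 1) with hs
  have hs1 : 1 ≤ s := by
    rw [hs]; rw [Nat.one_le_div_iff (by omega)]; omega
  have hsk : k ≤ (r + 1) * s := by
    have h1 : (r + 1) * s + (k + r) % (r + 1) = k + r := by
      rw [hs]; exact Nat.div_add_mod _ _
    have h2 : (k + r) % (r + 1) < r + 1 := Nat.mod_lt _ (by omega)
    omega
  set T : Fin r → ℕ := fun j => min ((j.1 + 1) * s) (k - 1) with hT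
  have hTlt : ∀ j, T j < k := fun j => by simp only [hT]; omega
  have hT1 : ∀ j, 1 ≤ T j := by
    intro j
    simp only [hT, le_min_iff]
    constructor
    · calc 1 ≤ s := hs1
        _ ≤ (j.1+1) * s := Nat.le_mul_of_pos_left s (by omega)
    · omega
  set tj : Fin r → Fin k := fun j => ⟨T j, hTlt j⟩ with htj
  -- gap points
  have hgap : ∀ j : Fin r, ∃ x, Φ ⟨T j - 1, by have := hTlt j; omega⟩ x = false ∧ Φ (tj j) x = true := by
    intro j
    set p : Fin k := ⟨T j - 1, by have := hTlt j; omega⟩ with hp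
    have hlt : p < tj j := by
      simp only [hp, htj, Fin.mk_lt_mk]
      have := hT1 j; omega
    have hwlt : wt (Φ p) < wt (Φ (tj j)) := by
      rw [hΦw, hΦw]
      exact Subtype.coe_lt_coe.mpr (e.strictMono hlt)
    have hnle : ¬ (Φ (tj j) ≤ Φ p) := fun hle => absurd (wt_mono hle) (by omega)
    obtain ⟨x, hx⟩ := not_forall.mp hnle
    refine ⟨x, ?_, ?_⟩ <;> revert hx <;> cases hΦp : Φ p x <;> cases hΦt : Φ (tj j) x <;>
      simp [hΦp, hΦt]
  choose q hq1 hq2 using hgap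
  -- the key equivalence
  have hkey : ∀ (j : Fin r) (f : X → Bool), f ∈ V → (f (q j) = true ↔ (e (tj j) : ℕ) ≤ wt f) := by
    intro j f hf
    constructor
    · intro h
      by_contra hcon
      push_neg at hcon
      have hwfW : wt f ∈ W := by
        rw [hWdef, Finset.mem_image]; exact ⟨f, (hVfmem f).mpr hf, rfl⟩
      set i₀ := e.symm ⟨wt f, hwfW⟩ with hi₀
      have hei₀ : (e i₀ : ℕ) = wt f := by rw [hi₀, OrderIso.apply_symm_apply]
      have hlt : i₀ < tj j := by
        rw [← e.lt_iff_lt, ← Subtype.coe_lt_coe, hei₀]; exact hcon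
      set p : Fin k := ⟨T j - 1, by have := hTlt j; omega⟩ with hp
      have hle : i₀ ≤ p := by
        simp only [hp, Fin.le_def]
        have : i₀.1 < T j := hlt
        omega
      have : wt f ≤ wt (Φ p) := by
        rw [← hei₀, hΦw]
        exact Subtype.coe_le_coe.mpr (e.monotone hle)
      have hfle : f ≤ Φ p := le_of_wt_le (hmono f hf) (hΦmono p) this
      have := hfle (q j)
      rw [h, hq1 j] at this
      exact absurd this (by simp)
    · intro h
      have : Φ (tj j) ≤ f := by
        apply le_of_wt_le (hΦmono _) (hmono f hf)
        rw [hΦw]; exact h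
      have := this (q j)
      rw [hq2 j] at this
      exact Bool.eq_true_of_true_le this
  -- the index map
  have hwW : ∀ f ∈ V, wt f ∈ W := by
    intro f hf; rw [hWdef, Finset.mem_image]; exact ⟨f, (hVfmem f).mpr hf, rfl⟩
  classical
  set ψ : (X → Bool) → ℕ := fun f => if h : wt f ∈ W then ((e.symm ⟨wt f, h⟩ : Fin k) : ℕ) else 0
    with hψ
  have hψinj : Set.InjOn ψ V := by
    intro f hf f' hf' h
    simp only [hψ, dif_pos (hwW f hf), dif_pos (hwW f' hf')] at h
    have := Fin.val_injective h
    have := e.symm.injective this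
    have : wt f = wt f' := congrArg Subtype.val this
    exact wt_inj (hmono f hf) (hmono f' hf') this
  have hψlt : ∀ f ∈ V, ψ f < k := by
    intro f hf; simp only [hψ, dif_pos (hwW f hf)]; exact Fin.is_lt _
  have hψkey : ∀ (f : X → Bool), f ∈ V → ∀ j : Fin r, (f (q j) = true ↔ T j ≤ ψ f) := by
    intro f hf j
    rw [hkey j f hf]
    simp only [hψ, dif_pos (hwW f hf)]
    constructor
    · intro h
      have : tj j ≤ e.symm ⟨wt f, hwW f hf⟩ := by
        rw [← e.le_iff_le, OrderIso.apply_symm_apply, ← Subtype.coe_le_coe]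
        exact h
      exact this
    · intro h
      have : tj j ≤ e.symm ⟨wt f, hwW f hf⟩ := h
      rw [← e.le_iff_le, OrderIso.apply_symm_apply, ← Subtype.coe_le_coe] at this
      exact this
  -- conclusion
  refine ⟨q, ?_⟩
  intro g
  set C := {f ∈ V | ∀ i, f (q i) = g i} with hC
  have hCsub : C ⊆ V := fun f hf => hf.1
  have hCidx : ∀ f ∈ C, ∀ j : Fin r, (T j ≤ ψ f ↔ g j = true) := by
    intro f hf j
    rw [← hψkey f hf.1 j, hf.2 j]
  set A := Finset.univ.filter (fun j : Fin r => g j = true) with hA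
  set L := if h : A.Nonempty then T (A.max' h) else 0 with hL
  have hwindow : ∀ f ∈ C, ψ f ∈ Set.Ico L (L + s) := by
    intro f hf
    constructor
    · -- lower bound
      by_cases hAne : A.Nonempty
      · rw [hL, dif_pos hAne]
        exact (hCidx f hf _).mpr (Finset.mem_filter.mp (A.max'_mem hAne)).2
      · rw [hL, dif_neg hAne]; omega
    · -- upper bound
      by_cases hAne : A.Nonempty
      · rw [hL, dif_pos hAne]
        set a := A.max' hAne with ha
        by_cases hlast : a.1 + 1 < r
        · set j' : Fin r := ⟨a.1 + 1, hlast⟩ with hj'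
          have hgj' : g j' ≠ true := by
            intro hgt
            have hjA : j' ∈ A := Finset.mem_filter.mpr ⟨Finset.mem_univ _, hgt⟩
            have := A.le_max' j' hjA
            rw [← ha] at this
            have : j'.1 ≤ a.1 := this
            simp only [hj'] at this; omega
          have h1 : ¬ (T j' ≤ ψ f) := fun h => hgj' ((hCidx f hf j').mp h)
          have h2 : T j' ≤ T a + s := by
            simp only [hT, hj']
            have : (a.1 + 1 + 1) * s = (a.1 + 1) * s + s := by ring
            omega
          omega
        · -- a is the last index
          have har : a.1 = r - 1 := by have := a.2; omega
          have h1 : ψ f < k := hψlt f (hCsub hf)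
          have h2 : k ≤ T a + s := by
            have hTa : T a = min (r * s) (k - 1) := by
              simp only [hT, har]
              congr 2
              omega
            have hb : (r + 1) * s = r * s + s := by ring
            rcases le_total (r * s) (k - 1) with h | h
            · rw [hTa, min_eq_left h]; omega
            · rw [hTa, min_eq_right h]; omega
          omega
      · -- no true guesses
        rw [hL, dif_neg hAne]
        have hg0 : g ⟨0, by omega⟩ ≠ true := by
          intro hgt
          exact hAne ⟨⟨0, by omega⟩, Finset.mem_filter.mpr ⟨Finset.mem_univ _, hgt⟩⟩
        have h1 : ¬ (T ⟨0, by omega⟩ ≤ ψ f) := fun h => hg0 ((hCidx f hf _).mp h)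
        have h2 : T ⟨0, by omega⟩ ≤ s := by simp only [hT]; omega
        omega
  calc C.ncard = (ψ '' C).ncard := (Set.ncard_image_of_injOn (hψinj.mono hCsub)).symm
    _ ≤ (Set.Ico L (L + s)).ncard := by
        apply Set.ncard_le_ncard _ (Set.finite_Ico _ _)
        rintro n ⟨f, hf, rfl⟩
        exact hwindow f hf
    _ = s := by
        rw [← Finset.coe_Ico, Set.ncard_coe_finset, Nat.card_Ico]
        omega

/-- The threshold sequence: if `aseq r m ≤ |V|` then the adversary can force `m` mistakes. -/
def aseq (r : ℕ) : ℕ → ℕ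
  | 0 => 1
  | m + 1 => (aseq r m * (r + 1)) / r + 1

lemma aseq_pos (r m : ℕ) : 1 ≤ aseq r m := by
  cases m with
  | zero => simp [aseq]
  | succ m => simp [aseq]

lemma aseq_two (r m : ℕ) (hr : 1 ≤ r) : 2 ≤ aseq r (m + 1) := by
  have h1 := aseq_pos r m
  simp only [aseq]
  have : 1 ≤ aseq r m * (r + 1) / r := by
    rw [Nat.one_le_div_iff (by omega)]
    calc r ≤ r + 1 := by omega
      _ ≤ aseq r m * (r + 1) := Nat.le_mul_of_pos_left _ (by omega)
  omega

lemma force (r : ℕ) (hr : 1 ≤ r) :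
    ∀ (m : ℕ) (V : Set (X → Bool)), (∀ f ∈ V, Monotone f) → aseq r m ≤ V.ncard →
    GuessForce (fun (x : Fin r → X) (g : Fin r → Bool) f => ∀ i, f (x i) = g i) V m := by
  intro m
  induction m with
  | zero =>
    intro V _ hcard
    exact GuessForce.zero V (Set.nonempty_of_ncard_ne_zero (by simp [aseq] at hcard; omega))
  | succ m ih =>
    intro V hmono hcard
    obtain ⟨k, hk⟩ : ∃ k, V.ncard = k := ⟨_, rfl⟩
    rw [hk] at hcard
    have hk2 : 2 ≤ k := le_trans (aseq_two r m hr) hcard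
    obtain ⟨q, hq⟩ := split r k hr V hmono hk hk2
    have hfin : V.Finite := Set.toFinite V
    -- arithmetic: removing the consistent set leaves at least `aseq r m` functions
    have harith : aseq r m + (k + r) / (r + 1) ≤ k := by
      have h1 : aseq r m * (r + 1) / r < k := by
        have := hcard; simp only [aseq] at this; omega
      have h2 : aseq r m * (r + 1) < k * r := (Nat.div_lt_iff_lt_mul (by omega)).mp h1
      have h3 : aseq r m < k := by
        have : aseq r m * r ≤ aseq r m * (r + 1) := Nat.mul_le_mul_left _ (by omega)
        by_contra hcon
        push_neg at hcon
        have : k * r ≤ aseq r m * r := Nat.mul_le_mul_right _ hcon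
        omega
      set a := aseq r m with ha
      set d := k - a with hd
      have hkd : k = a + d := by omega
      have hdiv : (k + r) / (r + 1) < d + 1 := by
        rw [Nat.div_lt_iff_lt_mul (by omega)]
        have e1 : a * (r + 1) = a * r + a := by ring
        have e2 : (a + d) * r = a * r + d * r := by ring
        have e3 : (d + 1) * (r + 1) = d * r + d + r + 1 := by ring
        rw [hkd] at h2 ⊢
        omega
      omega
    refine GuessForce.step V m q (fun _ => true) ?_ ?_
    · intro g
      simp only [if_true]
      -- nonempty: the consistent set has size < k
      have hCle := hq g
      by_contra hcon
      rw [Set.not_nonempty_iff_eq_empty] at hcon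
      have hsub : V ⊆ {f ∈ V | ∀ i, f (q i) = g i} := by
        intro f hf
        refine ⟨hf, ?_⟩
        by_contra hno
        have : f ∈ {f ∈ V | ¬ ∀ i, f (q i) = g i} := ⟨hf, hno⟩
        rw [hcon] at this
        exact this
      have hVC := Set.ncard_le_ncard hsub (Set.toFinite _)
      rw [hk] at hVC
      have h1 := aseq_pos r m
      generalize hcc : {f ∈ V | ∀ i, f (q i) = g i}.ncard = cc at hVC hCle
      clear hcc hk hq hcon hsub ih hmono hfin
      omega
    · intro g
      simp only [if_true]
      apply ih
      · intro f hf; exact hmono f hf.1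
      · have heq : {f ∈ V | ¬ ∀ i, f (q i) = g i} = V \ {f ∈ V | ∀ i, f (q i) = g i} := by
          ext f
          simp only [Set.mem_sep_iff, Set.mem_diff]
          tauto
        rw [heq, Set.ncard_diff (show {f ∈ V | ∀ i, f (q i) = g i} ⊆ V from fun f hf => hf.1)
          (Set.toFinite _), hk]
        have hCle := hq g
        generalize hcc : {f ∈ V | ∀ i, f (q i) = g i}.ncard = cc at hCle ⊢
        clear hcc hk hq heq ih hmono hfin
        omega

/-- Upper bound on forceable mistakes: needed for `BddAbove` of the sSup set. -/
lemma force_le {r : ℕ} {V : Set (X → Bool)} {m : ℕ}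
    (h : GuessForce (fun (x : Fin r → X) (g : Fin r → Bool) f => ∀ i, f (x i) = g i) V m) :
    m ≤ V.ncard := by
  induction h with
  | zero V hne => omega
  | step V m q c hne h ih =>
    have hfin : V.Finite := Set.toFinite V
    -- get an element of V
    obtain ⟨f₀, hf₀⟩ := hne (fun _ => true)
    have hf₀V : f₀ ∈ V := by
      rcases hc : c (fun _ => true) with _ | _ <;> rw [hc] at hf₀ <;>
        simp only [if_true, if_false, Bool.false_eq_true, ite_false, ite_true] at hf₀ <;>
        exact hf₀.1
    set g₀ : Fin r → Bool := fun i => f₀ (q i) with hg₀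
    have hok : ∀ i, f₀ (q i) = g₀ i := fun i => rfl
    have := ih g₀
    rcases hc : c g₀ with _ | _ <;> rw [hc] at this <;>
      simp only [if_true, if_false, Bool.false_eq_true, ite_false, ite_true] at this
    · -- answered "yes": version space keeps f₀, m+1 ≤ ncard of subset
      calc m + 1 ≤ {f ∈ V | ∀ i, f (q i) = g₀ i}.ncard := this
        _ ≤ V.ncard := Set.ncard_le_ncard (fun f hf => hf.1) hfin
    · -- answered "no": f₀ is excluded, strict decrease
      have hss : {f ∈ V | ¬ ∀ i, f (q i) = g₀ i} ⊂ V := by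
        constructor
        · exact fun f hf => hf.1
        · intro hsub
          have := hsub hf₀V
          exact this.2 hok
      exact Nat.succ_le_of_lt (lt_of_le_of_lt this (Set.ncard_lt_ncard hss hfin))

lemma aseq_le (r : ℕ) (hr : 1 ≤ r) (m : ℕ) :
    (aseq r m : ℝ) + r ≤ ((r : ℝ) + 1) * (((r : ℝ) + 1) / r) ^ m := by
  have hr0 : (0:ℝ) < r := by exact_mod_cast hr
  induction m with
  | zero => simp [aseq]; linarith
  | succ m ih =>
    have hdef : aseq r (m + 1) = aseq r m * (r + 1) / r + 1 := by simp [aseq]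
    have hstep : (aseq r (m + 1) : ℝ) ≤ (aseq r m : ℝ) * ((r : ℝ) + 1) / r + 1 := by
      rw [hdef]
      push_cast
      have := Nat.cast_div_le (α := ℝ) (m := aseq r m * (r + 1)) (n := r)
      push_cast at this
      linarith
    have key : (aseq r m : ℝ) * ((r:ℝ) + 1) / r + 1 + r
        = ((aseq r m : ℝ) + r) * (((r:ℝ) + 1) / r) := by
      field_simp
      ring
    calc (aseq r (m+1) : ℝ) + r ≤ (aseq r m : ℝ) * ((r:ℝ)+1)/r + 1 + r := by linarith
      _ = ((aseq r m : ℝ) + r) * (((r:ℝ)+1)/r) := key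
      _ ≤ (((r:ℝ)+1) * (((r:ℝ)+1)/r)^m) * (((r:ℝ)+1)/r) := by
          apply mul_le_mul_of_nonneg_right ih
          positivity
      _ = ((r:ℝ)+1) * (((r:ℝ)+1)/r)^(m+1) := by ring

lemma aseq_small (r : ℕ) (hr : 1 ≤ r) (ε : ℝ) (hε : 0 < ε) (n : ℕ) (hn2 : 2 ≤ n)
    (hlog : Real.log ((r:ℝ) + 1) + 1 ≤ ε * Real.log n) :
    aseq r ⌈(1 - ε) * r * Real.log n⌉₊ ≤ n := by
  have hr0 : (0:ℝ) < r := by exact_mod_cast hr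
  have hn0 : (0:ℝ) < n := by positivity
  set v := (1 - ε) * r * Real.log n with hv
  rcases lt_or_ge v 0 with hneg | hpos
  · have : ⌈v⌉₊ = 0 := Nat.ceil_eq_zero.mpr hneg.le
    rw [this]
    simp [aseq]
    omega
  · set m₀ := ⌈v⌉₊ with hm₀
    have hm₀le : (m₀ : ℝ) < v + 1 := Nat.ceil_lt_add_one hpos
    set ρ := ((r:ℝ) + 1) / r with hρ
    have hρ1 : 1 ≤ ρ := by rw [hρ, le_div_iff₀ hr0]; linarith
    have hρ0 : 0 < ρ := by linarith
    have hlogρ : Real.log ρ ≤ 1 / r := by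
      have := Real.log_le_sub_one_of_pos hρ0
      have hρeq : ρ - 1 = 1 / r := by rw [hρ]; field_simp; ring
      linarith
    have hlogρ0 : 0 ≤ Real.log ρ := Real.log_nonneg hρ1
    have hlogn0 : 0 ≤ Real.log n := Real.log_nonneg (by exact_mod_cast Nat.one_le_of_lt hn2)
    -- log of the bound
    have hmain : Real.log (((r:ℝ) + 1) * ρ ^ m₀) ≤ Real.log n := by
      rw [Real.log_mul (by positivity) (by positivity), Real.log_pow]
      have h1 : (m₀ : ℝ) * Real.log ρ ≤ (v + 1) * (1 / r) := by
        apply mul_le_mul hm₀le.le hlogρ hlogρ0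
        linarith
      have h2 : (v + 1) * (1 / r) = (1 - ε) * Real.log n + 1 / r := by
        rw [hv]; field_simp
      have h3 : (1:ℝ) / r ≤ 1 := by
        rw [div_le_one hr0]; exact_mod_cast hr
      nlinarith [hlog]
    have hbound : ((r:ℝ) + 1) * ρ ^ m₀ ≤ n := by
      have hx : (0:ℝ) < ((r:ℝ) + 1) * ρ ^ m₀ := by positivity
      exact (Real.log_le_log_iff hx hn0).mp hmain
    have := aseq_le r hr m₀
    have : (aseq r m₀ : ℝ) ≤ (n : ℝ) := by linarith
    exact_mod_cast this

end Aux

/-- Let `r ≥ 1`. For every `ε > 0` there exists `N` such that for every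
non-decreasing class `F` (a family of monotone functions from a finite linearly ordered set
`X` to `{0,1}`) with `|F| ≥ N`, `opt_weak(CART_r(F)) ≥ (1−ε)·r·ln |F|`. -/
theorem stmt1 (r : ℕ) (hr : 1 ≤ r) (ε : ℝ) (hε : 0 < ε) :
    ∃ N : ℕ, ∀ (X : Type u) [Fintype X] [LinearOrder X] (F : Set (X → Bool)),
      (∀ f ∈ F, Monotone f) → N ≤ F.ncard →
      (1 - ε) * r * Real.log F.ncard ≤ (optWeakCart r F : ℝ) := by
  classical
  refine ⟨max 2 (⌈Real.exp ((Real.log ((r:ℝ) + 1) + 1) / ε)⌉₊ + 1), ?_⟩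
  intro X _ _ F hmono hN
  obtain ⟨n, hn⟩ : ∃ n, F.ncard = n := ⟨_, rfl⟩
  rw [hn] at hN ⊢
  have hn2 : 2 ≤ n := le_trans (le_max_left _ _) hN
  have hr0 : (0:ℝ) < r := by exact_mod_cast hr
  have hn0 : (0:ℝ) < n := by positivity
  -- the logarithmic inequality from the size assumption
  have hlog : Real.log ((r:ℝ) + 1) + 1 ≤ ε * Real.log n := by
    set c := (Real.log ((r:ℝ) + 1) + 1) / ε with hc
    have h1 : ⌈Real.exp c⌉₊ + 1 ≤ n := le_trans (le_max_right _ _) hN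
    have h2 : Real.exp c ≤ (⌈Real.exp c⌉₊ : ℝ) := Nat.le_ceil _
    have h3 : Real.exp c ≤ (n : ℝ) := by
      have : ((⌈Real.exp c⌉₊ : ℕ) : ℝ) ≤ (n : ℝ) := by exact_mod_cast le_trans (by omega) h1
      linarith
    have h4 : c ≤ Real.log n := (Real.le_log_iff_exp_le hn0).mpr h3
    have h5 : ε * c ≤ ε * Real.log n := mul_le_mul_of_nonneg_left h4 hε.le
    have h6 : ε * c = Real.log ((r:ℝ) + 1) + 1 := by
      rw [hc]; field_simp
    linarith
  set m₀ := ⌈(1 - ε) * r * Real.log n⌉₊ with hm₀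
  have hsmall : aseq r m₀ ≤ n := aseq_small r hr ε hε n hn2 hlog
  have hforce : GuessForce (fun (x : Fin r → X) (g : Fin r → Bool) f => ∀ i, f (x i) = g i)
      F m₀ := force r hr m₀ F hmono (by rw [hn]; exact hsmall)
  have hbdd : BddAbove {m | GuessForce
      (fun (x : Fin r → X) (g : Fin r → Bool) f => ∀ i, f (x i) = g i) F m} :=
    ⟨F.ncard, fun m hm => force_le hm⟩
  have hle : m₀ ≤ optWeakCart r F := le_csSup hbdd hforce
  calc (1 - ε) * r * Real.log n ≤ (m₀ : ℝ) := Nat.le_ceil _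
    _ ≤ (optWeakCart r F : ℝ) := by exact_mod_cast hle
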